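/- arXiv:math/0207188 — 3 statements merged into one kernel-verified Lean document; each statement's English description precedes it below -/
import Mathlib

section
/- Let (H,f) be a symmetric bilinear lattice and c, c' two characteristic forms for f. If c' − c = 2·f̂(h) for some h ∈ H (i.e. c'(x) = c(x) + 2 f(h,x) for all x ∈ H), then the discriminant quadratic functions φ_{f,c} and φ_{f,c'} on H^♯/H are equal. -/
open scoped TensorProduct

noncomputable section

/-- ℚ/ℤ -/
abbrev QZ : Type := AddCircle (1 : ℚ)

section Lattice

variable {H : Type} [AddCommGroup H]

/-- canonical map H → ℚ ⊗ H -/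
def iotaQ (H : Type) [AddCommGroup H] : H →ₗ[ℤ] ℚ ⊗[ℤ] H :=
  TensorProduct.mk ℤ ℚ H 1

/-- the ℚ-bilinear extension of f to ℚ ⊗ H -/
def fQ (f : H →ₗ[ℤ] H →ₗ[ℤ] ℤ) : (ℚ ⊗[ℤ] H) →ₗ[ℚ] (ℚ ⊗[ℤ] H) →ₗ[ℚ] ℚ :=
  LinearMap.BilinForm.baseChange ℚ f

/-- the ℚ-linear extension of a linear form c : H → ℤ to ℚ ⊗ H -/
def cQ (c : H →ₗ[ℤ] ℤ) : (ℚ ⊗[ℤ] H) →ₗ[ℚ] ℚ :=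
  LinearMap.liftBaseChange ℚ ((Int.castAddHom ℚ).toIntLinearMap ∘ₗ c)

/-- the dual lattice H^♯ = {x ∈ ℚ⊗H : f_ℚ(x, H) ⊆ ℤ} -/
def dualLattice (f : H →ₗ[ℤ] H →ₗ[ℤ] ℤ) : AddSubgroup (ℚ ⊗[ℤ] H) where
  carrier := {x | ∀ h : H, ∃ n : ℤ, fQ f x (iotaQ H h) = (n : ℚ)}
  zero_mem' := fun h => ⟨0, by simp⟩
  add_mem' := by
    rintro x y hx hy h
    obtain ⟨n, hn⟩ := hx h
    obtain ⟨m, hm⟩ := hy h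
    exact ⟨n + m, by push_cast [map_add, LinearMap.add_apply, hn, hm]; ring⟩
  neg_mem' := by
    rintro x hx h
    obtain ⟨n, hn⟩ := hx h
    exact ⟨-n, by push_cast [map_neg, LinearMap.neg_apply, hn]; ring⟩

/-- the image of H, as a subgroup of the dual lattice -/
def latInDual (f : H →ₗ[ℤ] H →ₗ[ℤ] ℤ) : AddSubgroup (dualLattice f) :=
  ((iotaQ H).toAddMonoidHom.range).addSubgroupOf (dualLattice f)

/-- the discriminant group G_f = H^♯/H -/
def Gf (f : H →ₗ[ℤ] H →ₗ[ℤ] ℤ) : Type :=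
  dualLattice f ⧸ latInDual f

instance (f : H →ₗ[ℤ] H →ₗ[ℤ] ℤ) : AddCommGroup (Gf f) :=
  QuotientAddGroup.Quotient.addCommGroup _

/-- the discriminant quadratic function, on representatives:
φ_{f,c}(x) = (1/2)(f_ℚ(x,x) − c_ℚ(x)) mod 1 -/
def phiRep (f : H →ₗ[ℤ] H →ₗ[ℤ] ℤ) (c : H →ₗ[ℤ] ℤ) (x : dualLattice f) : QZ :=
  ((((1 : ℚ)/2) * (fQ f x x - cQ c x) : ℚ) : QZ)

/-- the (preimage in H^♯ of the) radical of L_f -/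
def radSub (f : H →ₗ[ℤ] H →ₗ[ℤ] ℤ) : AddSubgroup (dualLattice f) where
  carrier := {x | ∀ y : dualLattice f, ∃ n : ℤ, fQ f x y = (n : ℚ)}
  zero_mem' := fun y => ⟨0, by simp⟩
  add_mem' := by
    rintro x x' hx hx' y
    obtain ⟨n, hn⟩ := hx y
    obtain ⟨m, hm⟩ := hx' y
    exact ⟨n + m, by push_cast [AddSubgroup.coe_add, map_add, LinearMap.add_apply, hn, hm]; ring⟩
  neg_mem' := by
    rintro x hx y
    obtain ⟨n, hn⟩ := hx y
    exact ⟨-n, by push_cast [AddSubgroup.coe_neg, map_neg, LinearMap.neg_apply, hn]; ring⟩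

end Lattice


section Aux

variable {H : Type} [AddCommGroup H]

lemma fQ_tmul (f : H →ₗ[ℤ] H →ₗ[ℤ] ℤ) (a b : ℚ) (m n : H) :
    fQ f (a ⊗ₜ m) (b ⊗ₜ n) = a * b * (f m n : ℚ) := by
  simp [fQ, LinearMap.BilinForm.baseChange_tmul]
  ring

lemma cQ_tmul (c : H →ₗ[ℤ] ℤ) (a : ℚ) (m : H) :
    cQ c (a ⊗ₜ m) = a * (c m : ℚ) := by
  simp [cQ, LinearMap.liftBaseChange_tmul]

lemma cQ_diff (f : H →ₗ[ℤ] H →ₗ[ℤ] ℤ) (c c' : H →ₗ[ℤ] ℤ) (h0 : H)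
    (hh : ∀ x : H, c' x = c x + 2 * f h0 x) (x : ℚ ⊗[ℤ] H) :
    cQ c' x = cQ c x + 2 * fQ f (iotaQ H h0) x := by
  induction x using TensorProduct.induction_on with
  | zero => simp
  | tmul q h =>
      rw [cQ_tmul, cQ_tmul, hh h]
      have : fQ f (iotaQ H h0) (q ⊗ₜ h) = 1 * q * (f h0 h : ℚ) := by
        exact fQ_tmul f 1 q h0 h
      rw [this]; push_cast; ring
  | add x y hx hy => simp only [map_add, hx, hy]; ring

lemma fQ_symm (f : H →ₗ[ℤ] H →ₗ[ℤ] ℤ) (hf : ∀ x y, f x y = f y x)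
    (x y : ℚ ⊗[ℤ] H) : fQ f x y = fQ f y x := by
  induction x using TensorProduct.induction_on with
  | zero => simp
  | tmul a m =>
      induction y using TensorProduct.induction_on with
      | zero => simp
      | tmul b n => rw [fQ_tmul, fQ_tmul, hf]; ring
      | add u v hu hv => simp only [map_add, LinearMap.add_apply, hu, hv]
  | add u v hu hv => simp only [map_add, LinearMap.add_apply, hu, hv]

end Aux

-- STATEMENT 10
theorem stmt10 {H : Type} [AddCommGroup H] [Module.Free ℤ H] [Module.Finite ℤ H]
    (f : H →ₗ[ℤ] H →ₗ[ℤ] ℤ) (hf : ∀ x y, f x y = f y x)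
    (c c' : H →ₗ[ℤ] ℤ) (hc : ∀ h : H, (2 : ℤ) ∣ f h h - c h)
    (hc' : ∀ h : H, (2 : ℤ) ∣ f h h - c' h)
    (hcc' : ∃ h0 : H, ∀ x : H, c' x = c x + 2 * f h0 x) :
    ∀ x : dualLattice f, phiRep f c x = phiRep f c' x := by
  obtain ⟨h0, hh⟩ := hcc'
  intro x
  obtain ⟨n, hn⟩ := x.2 h0
  have hsym : fQ f (iotaQ H h0) (x : ℚ ⊗[ℤ] H) = (n : ℚ) := by
    rw [fQ_symm f hf]; exact hn
  unfold phiRep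
  rw [cQ_diff f c c' h0 hh, hsym]
  have : (1 : ℚ)/2 * ((fQ f x) x - (cQ c x + 2 * (n : ℚ)))
      = (1 : ℚ)/2 * ((fQ f x) x - cQ c x) - (n : ℚ) := by ring
  rw [this]
  push_cast [sub_eq_add_neg]
  rw [AddCircle.coe_add]
  have : ((-(n : ℚ) : ℚ) : QZ) = 0 := by
    rw [AddCircle.coe_eq_zero_iff]
    exact ⟨-n, by simp⟩
  rw [this, add_zero]
end
end

section
/- For a symmetric n×n integer matrix B, the set of characteristic solutions S = {r ∈ (ℤ/2)ⁿ : ∀i, Σ_j B_{ij} r_j ≡ B_{ii} mod 2} is nonempty, and it is a free transitive set under the action of the kernel of the mod-2 reduction of B acting by translation; more precisely, S is an affine subspace of (ℤ/2)ⁿ over Ker(B mod 2 : (ℤ/2)ⁿ → (ℤ/2)ⁿ). -/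
noncomputable section

open Matrix Finset

lemma quad_vanish (n : ℕ) (A : Matrix (Fin n) (Fin n) (ZMod 2)) (hA : A.IsSymm)
    (c : Fin n → ZMod 2) : c ⬝ᵥ A.mulVec c = ∑ i, A i i * c i := by
  have hdot : c ⬝ᵥ A.mulVec c = ∑ p ∈ univ ×ˢ univ, c p.1 * A p.1 p.2 * c p.2 := by
    rw [Finset.sum_product]
    simp [dotProduct, Matrix.mulVec, dotProduct, Finset.mul_sum, mul_assoc]
  rw [hdot, ← Finset.diag_union_offDiag, Finset.sum_union (Finset.disjoint_diag_offDiag _)]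
  have h1 : ∑ p ∈ Finset.univ.diag, c p.1 * A p.1 p.2 * c p.2 = ∑ i, A i i * c i := by
    rw [Finset.sum_diag]
    refine Finset.sum_congr rfl fun i _ => ?_
    have hsq : (c i) * (c i) = c i := by
      have : ∀ x : ZMod 2, x * x = x := by decide
      exact this _
    calc c i * A i i * c i = A i i * (c i * c i) := by ring
    _ = A i i * c i := by rw [hsq]
  have h2 : ∑ p ∈ Finset.univ.offDiag, c p.1 * A p.1 p.2 * c p.2 = 0 := by
    refine Finset.sum_involution (fun p _ => p.swap) ?_ ?_ (fun a ha =>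
      Finset.mem_offDiag.mpr ⟨Finset.mem_univ _, Finset.mem_univ _,
        fun h => (Finset.mem_offDiag.mp ha).2.2 h.symm⟩) ?_
    · intro a ha
      have hs : A a.2 a.1 = A a.1 a.2 := hA.apply a.1 a.2
      calc c a.1 * A a.1 a.2 * c a.2 + c a.swap.1 * A a.swap.1 a.swap.2 * c a.swap.2
          = c a.1 * A a.1 a.2 * c a.2 + c a.1 * A a.1 a.2 * c a.2 := by
            simp only [Prod.fst_swap, Prod.snd_swap, hs]; ring
        _ = 0 := by
            have : ∀ x : ZMod 2, x + x = 0 := by decide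
            exact this _
    · intro a ha _ h
      have := congrArg Prod.fst h
      exact (Finset.mem_offDiag.mp ha).2.2 this.symm
    · intro a ha
      exact Prod.swap_swap a
  rw [h1, h2, add_zero]

-- STATEMENT 17
theorem stmt17 (n : ℕ) (B : Matrix (Fin n) (Fin n) ℤ) (hB : B.IsSymm) :
    {r : Fin n → ZMod 2 |
        (B.map (Int.cast : ℤ → ZMod 2)).mulVec r = fun i => ((B i i : ZMod 2))}.Nonempty ∧
    ∀ r ∈ {r : Fin n → ZMod 2 |
        (B.map (Int.cast : ℤ → ZMod 2)).mulVec r = fun i => ((B i i : ZMod 2))},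
      ∀ r' : Fin n → ZMod 2,
        (r' ∈ {r : Fin n → ZMod 2 |
            (B.map (Int.cast : ℤ → ZMod 2)).mulVec r = fun i => ((B i i : ZMod 2))} ↔
          r' - r ∈ LinearMap.ker (Matrix.mulVecLin (B.map (Int.cast : ℤ → ZMod 2)))) := by
  set A : Matrix (Fin n) (Fin n) (ZMod 2) := B.map (Int.cast : ℤ → ZMod 2) with hAdef
  have hA : A.IsSymm := by
    ext i j
    simp [hAdef, Matrix.map_apply, Matrix.transpose_apply, ← hB.apply i j]
  have hd : ∀ i, ((B i i : ZMod 2)) = A i i := fun i => by simp [hAdef]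
  constructor
  · -- nonemptiness: diag ∈ range of mulVecLin A
    have hmem : (fun i => ((B i i : ZMod 2))) ∈ LinearMap.range A.mulVecLin := by
      rw [← Subspace.forall_mem_dualAnnihilator_apply_eq_zero_iff]
      intro φ hφ
      rw [Submodule.mem_dualAnnihilator] at hφ
      set c : Fin n → ZMod 2 := fun j => φ (Pi.single j 1) with hc
      have hφ_eq : ∀ v : Fin n → ZMod 2, φ v = v ⬝ᵥ c := by
        intro v
        have hv : v = ∑ j, v j • Pi.single j 1 := by
          ext i
          simp [Pi.single_apply, Finset.sum_ite_eq' Finset.univ i]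
        rw [hv]
        simp [map_sum, dotProduct, hc, Finset.sum_apply, Pi.single_apply, mul_comm]
      have h0 : ∀ x, (A.mulVec x) ⬝ᵥ c = 0 := by
        intro x
        rw [← hφ_eq]
        exact hφ _ ⟨x, rfl⟩
      have hker : A.mulVec c = 0 := by
        ext i
        have h1 : (A.mulVec (Pi.single i 1)) ⬝ᵥ c = (A.mulVec c) i := by
          have hsingle : A.mulVec (Pi.single i 1) = fun k => A k i := by
            rw [Matrix.mulVec_single]
            simp
            rfl
          rw [hsingle]
          simp only [dotProduct, Matrix.mulVec]
          refine Finset.sum_congr rfl fun k _ => ?_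
          rw [hA.apply i k]
        rw [Pi.zero_apply, ← h1]
        exact h0 _
      have hsum : ∑ i, A i i * c i = 0 := by
        have hq := quad_vanish n A hA c
        rw [hker, dotProduct_zero] at hq
        exact hq.symm
      rw [hφ_eq]
      calc (fun i => ((B i i : ZMod 2))) ⬝ᵥ c = ∑ i, A i i * c i := by
            simp only [dotProduct]
            exact Finset.sum_congr rfl fun i _ => by rw [hd i]
        _ = 0 := hsum
    obtain ⟨r, hr⟩ := hmem
    exact ⟨r, hr⟩
  · intro r hr r'
    simp only [Set.mem_setOf_eq] at hr ⊢
    rw [LinearMap.mem_ker, Matrix.mulVecLin_apply, Matrix.mulVec_sub, hr, sub_eq_zero]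
end
end

section
/- Let (H,f) be a symmetric bilinear lattice with characteristic form c and let φ_{f,c} be the discriminant quadratic function on G_f = H^♯/H. For every element of the radical of L_f of the form induced by y ⊗ r with y ∈ Ker f̂ and r ∈ ℚ, one has φ_{f,c}([y ⊗ r]) = −(1/2)·r·c(y) mod 1; in particular φ_{f,c} restricted to the radical is a group homomorphism. -/
open scoped TensorProduct

noncomputable section

lemma fQ_ker_zero {H : Type} [AddCommGroup H] (f : H →ₗ[ℤ] H →ₗ[ℤ] ℤ)
    (y : H) (hy : f y = 0) (r : ℚ) (z : ℚ ⊗[ℤ] H) :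
    fQ f (r • iotaQ H y) z = 0 := by
  have h1 : fQ f (iotaQ H y) z = 0 := by
    induction z using TensorProduct.induction_on with
    | zero => simp
    | tmul a h =>
      rw [show iotaQ H y = (1:ℚ) ⊗ₜ[ℤ] y from rfl]
      simp [fQ, iotaQ, LinearMap.BilinForm.baseChange_tmul, hy]
    | add a b ha hb => simp [ha, hb]
  simp [map_smul, h1]

lemma cQ_smul_iota {H : Type} [AddCommGroup H] (c : H →ₗ[ℤ] ℤ) (r : ℚ) (y : H) :
    cQ c (r • iotaQ H y) = r * (c y : ℚ) := by
  rw [show iotaQ H y = (1:ℚ) ⊗ₜ[ℤ] y from rfl]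
  simp [cQ, iotaQ]

-- STATEMENT 19
theorem stmt19 {H : Type} [AddCommGroup H] [Module.Free ℤ H] [Module.Finite ℤ H]
    (f : H →ₗ[ℤ] H →ₗ[ℤ] ℤ) (hf : ∀ x y, f x y = f y x)
    (c : H →ₗ[ℤ] ℤ) (hc : ∀ h : H, (2 : ℤ) ∣ f h h - c h) :
    (∀ (x : dualLattice f) (y : H) (r : ℚ), y ∈ LinearMap.ker f →
      (x : ℚ ⊗[ℤ] H) = r • iotaQ H y →
      phiRep f c x = ((-(1/2 * r * (c y : ℚ)) : ℚ) : QZ)) ∧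
    (∀ (x x' : dualLattice f) (y y' : H) (r r' : ℚ),
      y ∈ LinearMap.ker f → y' ∈ LinearMap.ker f →
      (x : ℚ ⊗[ℤ] H) = r • iotaQ H y → (x' : ℚ ⊗[ℤ] H) = r' • iotaQ H y' →
      phiRep f c (x + x') = phiRep f c x + phiRep f c x') := by
  
  have key : ∀ (x : dualLattice f) (y : H) (r : ℚ), f y = 0 →
      (x : ℚ ⊗[ℤ] H) = r • iotaQ H y →
      phiRep f c x = (((1:ℚ)/2 * (0 - r * (c y : ℚ)) : ℚ) : QZ) := by
    intro x y r hy hx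
    unfold phiRep
    rw [hx, fQ_ker_zero f y hy, cQ_smul_iota]
  constructor
  · intro x y r hy hx
    rw [key x y r hy hx]
    congr 1
    ring
  · intro x x' y y' r r' hy hy' hx hx'
    have hadd : phiRep f c (x + x') =
        (((1:ℚ)/2 * (0 - (cQ c x + cQ c x')) : ℚ) : QZ) := by
      unfold phiRep
      have hcoe : ((x + x' : dualLattice f) : ℚ ⊗[ℤ] H) = (x : ℚ ⊗[ℤ] H) + x' := rfl
      rw [hcoe, map_add, map_add, LinearMap.add_apply, LinearMap.add_apply]
      rw [show (fQ f (x : ℚ ⊗[ℤ] H)) = fQ f (r • iotaQ H y) by rw [hx],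
        show (fQ f (x' : ℚ ⊗[ℤ] H)) = fQ f (r' • iotaQ H y') by rw [hx']]
      rw [fQ_ker_zero f y hy, fQ_ker_zero f y hy, fQ_ker_zero f y' hy', fQ_ker_zero f y' hy',
        map_add (cQ c)]
      congr 1
      ring
    rw [hadd, key x y r hy hx, key x' y' r' hy' hx']
    rw [hx, cQ_smul_iota, hx', cQ_smul_iota]
    rw [← QuotientAddGroup.mk_add]
    congr 1
    ring
end
end
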